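/- arXiv:2503.22522 — 3 statements merged into one kernel-verified Lean document; each statement's English description precedes it below -/
import Mathlib

section
/- A moving robot performing ribbon-following at distance d = 2r/(sqrt(3)-1) from the nearest robot of the parent ribbon does not collide with any other robot: the minimum distance from any point of the circular arc of radius d joining two adjacent ribbon vertices (centered at a parent-ribbon vertex) to any other lattice point occupied by a robot is at least 2r. -/
/-- Sixth root of unity direction: the triangular-lattice basis rotation. -/
noncomputable def w6 : ℂ := Complex.exp ((Real.pi : ℂ) / 3 * Complex.I)

/-- The triangular (hexagonal) lattice with spacing `d`, as a set of points of the plane. -/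
noncomputable def lat (d : ℝ) : Set ℂ :=
  {z | ∃ a b : ℤ, z = (d : ℂ) * ((a : ℂ) + (b : ℂ) * w6)}

lemma w6_ne : w6 ≠ 0 := Complex.exp_ne_zero _

lemma w6_exp : w6 = Complex.exp (((Real.pi / 3 : ℝ) : ℂ) * Complex.I) := by
  unfold w6; push_cast; ring_nf

lemma w6_eq : w6 = ((1/2 : ℝ) : ℂ) + ((Real.sqrt 3 / 2 : ℝ) : ℂ) * Complex.I := by
  rw [w6, Complex.exp_mul_I]
  have h1 : ((Real.pi : ℂ) / 3) = ((Real.pi / 3 : ℝ) : ℂ) := by push_cast; ring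
  rw [h1, ← Complex.ofReal_cos, ← Complex.ofReal_sin, Real.cos_pi_div_three,
    Real.sin_pi_div_three]

lemma w6_sq : w6 ^ 2 = w6 - 1 := by
  have hq : ((Real.sqrt 3 : ℝ) : ℂ) ^ 2 = 3 := by
    norm_cast
    rw [Real.sq_sqrt]; norm_num
  rw [w6_eq]
  push_cast
  linear_combination (Complex.I ^ 2 / 4) * hq + (3/4) * Complex.I_sq

lemma w6_cube : w6 ^ 3 = -1 := by linear_combination (w6 + 1) * w6_sq

lemma w6_p4 : w6 ^ 4 = -w6 := by linear_combination w6 * w6_cube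

lemma w6_p5 : w6 ^ 5 = 1 - w6 := by linear_combination w6^2 * w6_cube - w6_sq

lemma w6_pow6 : w6 ^ 6 = 1 := by linear_combination (w6^3 - 1) * w6_cube

lemma w6_abs : ‖w6‖ = 1 := by
  rw [w6_exp]; exact Complex.norm_exp_ofReal_mul_I _

lemma w6_zpow_mod (m : ℤ) : w6 ^ m = w6 ^ (m % 6) := by
  conv_lhs => rw [← Int.mul_ediv_add_emod m 6]
  rw [zpow_add₀ w6_ne, zpow_mul]
  norm_num [zpow_ofNat, w6_pow6]

lemma exp_I_eq (s : ℝ) :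
    Complex.exp ((s:ℂ) * Complex.I)
      = ((Real.cos s : ℝ) : ℂ) + ((Real.sin s : ℝ) : ℂ) * Complex.I := by
  rw [Complex.exp_mul_I, ← Complex.ofReal_cos, ← Complex.ofReal_sin]

lemma form_cases (A B : ℤ) (h : ¬(A = 0 ∧ B = 0)) :
    A^2 + A*B + B^2 = 1 ∨ 3 ≤ A^2 + A*B + B^2 := by
  by_contra h'
  push_neg at h'
  obtain ⟨h1, h2⟩ := h'
  have hB : B^2 ≤ 3 := by nlinarith [sq_nonneg (2*A+B)]
  have hB1 : -1 ≤ B ∧ B ≤ 1 := by constructor <;> nlinarith [sq_nonneg (B-1), sq_nonneg (B+1)]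
  have hA : (2*A+B)^2 ≤ 11 := by nlinarith [sq_nonneg B]
  have hA1 : -2 ≤ A ∧ A ≤ 2 := by
    constructor <;> nlinarith [sq_nonneg (2*A+B-3), sq_nonneg (2*A+B+3)]
  obtain ⟨hb1, hb2⟩ := hB1
  obtain ⟨ha1, ha2⟩ := hA1
  interval_cases A <;> interval_cases B <;> omega

lemma neighbor (A B : ℤ) (h1 : A^2 + A*B + B^2 = 1) :
    ∃ k : ℕ, (A:ℂ) + B*w6 = w6^k := by
  have hB1 : -1 ≤ B ∧ B ≤ 1 := by
    constructor <;> nlinarith [sq_nonneg (B-1), sq_nonneg (B+1), sq_nonneg (2*A+B)]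
  have hA1 : -1 ≤ A ∧ A ≤ 1 := by
    constructor <;> nlinarith [sq_nonneg (A-1), sq_nonneg (A+1), sq_nonneg (A+2*B)]
  obtain ⟨hb1, hb2⟩ := hB1
  obtain ⟨ha1, ha2⟩ := hA1
  interval_cases A <;> interval_cases B
  · omega
  · exact ⟨3, by push_cast; linear_combination -(w6+1) * w6_sq⟩
  · exact ⟨2, by push_cast; linear_combination -w6_sq⟩
  · exact ⟨4, by push_cast; linear_combination -(w6^2+w6) * w6_sq⟩
  · omega
  · exact ⟨1, by push_cast; ring⟩
  · exact ⟨5, by push_cast; linear_combination -(w6^3 + w6^2 - 1) * w6_sq⟩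
  · exact ⟨0, by push_cast; ring⟩
  · omega

lemma normSq_form (A B : ℤ) :
    Complex.normSq ((A:ℂ) + (B:ℂ) * w6) = ((A^2 + A*B + B^2 : ℤ) : ℝ) := by
  have hs3 : Real.sqrt 3 ^ 2 = 3 := Real.sq_sqrt (by norm_num)
  have h : (A:ℂ) + (B:ℂ) * w6
      = (((A:ℝ) + B/2 : ℝ) : ℂ) + (((B:ℝ) * Real.sqrt 3 / 2 : ℝ) : ℂ) * Complex.I := by
    rw [w6_eq]; push_cast; ring
  rw [h, Complex.normSq_add_mul_I]
  push_cast
  linear_combination ((B:ℝ)^2/4) * hs3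

lemma chord (X : ℂ) (a b c σ : ℝ) (hX : X = (a:ℂ) + (b:ℂ) * Complex.I)
    (h : 1 ≤ (a - c)^2 + (b - σ)^2) :
    1 ≤ ‖X - ((c:ℂ) + (σ:ℂ) * Complex.I)‖ := by
  have h2 : X - ((c:ℂ) + (σ:ℂ) * Complex.I)
      = ((a - c : ℝ) : ℂ) + ((b - σ : ℝ) : ℂ) * Complex.I := by
    rw [hX]; push_cast; ring
  have h3 : ‖X - ((c:ℂ) + (σ:ℂ) * Complex.I)‖ ^ 2
      = (a - c)^2 + (b - σ)^2 := by
    rw [Complex.sq_norm, h2, Complex.normSq_add_mul_I]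
  nlinarith [norm_nonneg (X - ((c:ℂ) + (σ:ℂ) * Complex.I))]

lemma main_bound (c σ : ℝ) (hc : 1/2 ≤ c) (hc1 : c ≤ 1) (h1 : σ^2 + c^2 = 1)
    (nt : ℕ) (hnt : nt ≤ 5)
    (hcase : (0 ≤ σ ∧ 2 ≤ nt) ∨ (σ ≤ 0 ∧ 1 ≤ nt ∧ nt ≤ 4)) :
    1 ≤ ‖w6 ^ nt - ((c:ℂ) + (σ:ℂ) * Complex.I)‖ := by
  have hs3 : Real.sqrt 3 ^ 2 = 3 := Real.sq_sqrt (by norm_num)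
  have hq0 : (0:ℝ) ≤ Real.sqrt 3 := Real.sqrt_nonneg 3
  interval_cases nt
  · rcases hcase with ⟨_, h⟩ | ⟨_, h, _⟩ <;> omega
  · -- nt = 1 : σ ≤ 0 case
    have hσ : σ ≤ 0 := by rcases hcase with ⟨_, h⟩ | ⟨h, _⟩; omega; exact h
    refine chord _ (1/2) (Real.sqrt 3 / 2) c σ (by rw [pow_one, w6_eq]) ?_
    nlinarith [mul_nonneg hq0 (neg_nonneg.mpr hσ)]
  · refine chord _ (-(1/2)) (Real.sqrt 3 / 2) c σ (by rw [w6_sq, w6_eq]; push_cast; ring) ?_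
    rcases le_or_gt σ 0 with hσ | hσ
    · nlinarith [mul_nonneg hq0 (neg_nonneg.mpr hσ)]
    · nlinarith [sq_nonneg (Real.sqrt 3 * σ - 1 - c), sq_nonneg (Real.sqrt 3 * σ + 1 + c),
        mul_nonneg hq0 hσ.le]
  · refine chord _ (-1) 0 c σ (by rw [w6_cube]; push_cast; ring) ?_
    nlinarith
  · refine chord _ (-(1/2)) (-(Real.sqrt 3 / 2)) c σ (by rw [w6_p4, w6_eq]; push_cast; ring) ?_
    rcases le_or_gt 0 σ with hσ | hσ
    · nlinarith [mul_nonneg hq0 hσ]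
    · nlinarith [sq_nonneg (Real.sqrt 3 * σ - 1 - c), sq_nonneg (Real.sqrt 3 * σ + 1 + c),
        mul_nonneg hq0 (neg_nonneg.mpr hσ.le)]
  · -- nt = 5 : σ ≥ 0 case
    have hσ : 0 ≤ σ := by rcases hcase with ⟨h, _⟩ | ⟨_, _, h⟩; exact h; omega
    refine chord _ (1/2) (-(Real.sqrt 3 / 2)) c σ (by rw [w6_p5, w6_eq]; push_cast; ring) ?_
    nlinarith [mul_nonneg hq0 hσ]

set_option maxHeartbeats 1000000 in
/-- A robot performing ribbon-following along the circular arc of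
radius `d = 2r/(√3 - 1)` centered at a parent-ribbon vertex `v`, joining adjacent
ribbon vertices `x` and `y` (central angle `π/3`), keeps a distance of at least `2r`
from every other lattice point (hence from every other robot). -/
theorem stmt12 (r d : ℝ) (hr : 0 < r) (hd : d = 2 * r / (Real.sqrt 3 - 1))
    (v x y : ℂ) (hv : v ∈ lat d) (hx : x ∈ lat d) (hy : y ∈ lat d)
    (hvx : dist v x = d) (hvy : dist v y = d) (hxy : dist x y = d)
    (φ : ℝ) (hφ : |φ| = Real.pi / 3)
    (hrot : y - v = (x - v) * Complex.exp ((φ : ℂ) * Complex.I))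
    (p : ℂ) (hp : p ∈ lat d) (hpx : p ≠ x) (hpy : p ≠ y) (hpv : p ≠ v)
    (z : ℂ) (t : ℝ) (ht : t ∈ Set.Icc (0 : ℝ) 1)
    (hz : z - v = (x - v) * Complex.exp (((t * φ : ℝ) : ℂ) * Complex.I)) :
    2 * r ≤ dist p z := by
  have hs3 : Real.sqrt 3 ^ 2 = 3 := Real.sq_sqrt (by norm_num)
  have hq0 : (0:ℝ) ≤ Real.sqrt 3 := Real.sqrt_nonneg 3
  have h1q : (1:ℝ) < Real.sqrt 3 := by nlinarith
  have hq2 : Real.sqrt 3 < 2 := by nlinarith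
  have hd0 : 0 < d := by rw [hd]; exact div_pos (by linarith) (by linarith)
  have hne : Real.sqrt 3 - 1 ≠ 0 := by linarith
  have h2r : 2 * r = (Real.sqrt 3 - 1) * d := by
    rw [hd]; field_simp
  have hπ : (0:ℝ) < Real.pi := Real.pi_pos
  obtain ⟨t0, t1⟩ := ht
  have hxv : ‖x - v‖ = d := by
    rw [← Complex.dist_eq, dist_comm]; exact hvx
  have hvz : dist z v = d := by
    rw [Complex.dist_eq, hz, norm_mul, Complex.norm_exp_ofReal_mul_I, mul_one, hxv]
  obtain ⟨av, bv, hv'⟩ := hv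
  obtain ⟨axx, bxx, hx'⟩ := hx
  obtain ⟨app, bpp, hp'⟩ := hp
  have hpv' : p - v = (d:ℂ) * (((app - av : ℤ):ℂ) + ((bpp - bv : ℤ):ℂ) * w6) := by
    rw [hp', hv']; push_cast; ring
  have hxv' : x - v = (d:ℂ) * (((axx - av : ℤ):ℂ) + ((bxx - bv : ℤ):ℂ) * w6) := by
    rw [hx', hv']; push_cast; ring
  have hABne : ¬(app - av = 0 ∧ bpp - bv = 0) := by
    rintro ⟨h1, h2⟩
    apply hpv
    have hz0 : p - v = 0 := by rw [hpv', h1, h2]; push_cast; ring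
    exact sub_eq_zero.mp hz0
  have hnormpv : ‖p - v‖ ^ 2
      = d^2 * (((app-av)^2 + (app-av)*(bpp-bv) + (bpp-bv)^2 : ℤ) : ℝ) := by
    rw [hpv', Complex.sq_norm, Complex.normSq_mul, normSq_form, Complex.normSq_ofReal]
    ring
  rcases form_cases _ _ hABne with hform | hform
  · -- neighbor case
    obtain ⟨k, hk⟩ := neighbor _ _ hform
    have hpveq : p - v = (d:ℂ) * w6 ^ k := by rw [hpv', hk]
    have hABx : ¬(axx - av = 0 ∧ bxx - bv = 0) := by
      rintro ⟨h1, h2⟩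
      have hz0 : x - v = 0 := by rw [hxv', h1, h2]; push_cast; ring
      rw [hz0] at hxv
      simp at hxv
      linarith
    have hnormxv : ‖x - v‖ ^ 2
        = d^2 * (((axx-av)^2 + (axx-av)*(bxx-bv) + (bxx-bv)^2 : ℤ) : ℝ) := by
      rw [hxv', Complex.sq_norm, Complex.normSq_mul, normSq_form, Complex.normSq_ofReal]
      ring
    have hformx : (axx-av)^2 + (axx-av)*(bxx-bv) + (bxx-bv)^2 = 1 := by
      rcases form_cases _ _ hABx with h | h
      · exact h
      · exfalso
        rw [hxv] at hnormxv
        have h3 : (3:ℝ) ≤ (((axx-av)^2 + (axx-av)*(bxx-bv) + (bxx-bv)^2 : ℤ) : ℝ) := by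
          exact_mod_cast h
        nlinarith
    obtain ⟨j, hj⟩ := neighbor _ _ hformx
    have hxveq : x - v = (d:ℂ) * w6 ^ j := by rw [hxv', hj]
    set n : ℤ := ((k:ℤ) - (j:ℤ)) % 6 with hn
    have hn0 : 0 ≤ n := Int.emod_nonneg _ (by norm_num)
    have hn6 : n < 6 := Int.emod_lt_of_pos _ (by norm_num)
    have hkj : w6 ^ k = w6 ^ j * w6 ^ n.toNat := by
      have h1 : w6 ^ ((k:ℤ)) = w6 ^ ((j:ℤ)) * w6 ^ n := by
        rw [hn, ← w6_zpow_mod, ← zpow_add₀ w6_ne]; congr 1; ring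
      have h2 : w6 ^ n = w6 ^ n.toNat := by
        rw [← zpow_natCast, Int.toNat_of_nonneg hn0]
      rw [h2] at h1
      simpa [zpow_natCast] using h1
    set s := t * φ with hs
    have habss : |s| ≤ Real.pi / 3 := by
      rw [hs, abs_mul, hφ, abs_of_nonneg t0]
      nlinarith
    have hc : 1/2 ≤ Real.cos s := by
      have h1 := Real.cos_le_cos_of_nonneg_of_le_pi (abs_nonneg s) (by linarith) habss
      rw [Real.cos_pi_div_three, Real.cos_abs] at h1
      exact h1
    have hc1 := Real.cos_le_one s
    have hcs : Real.sin s ^ 2 + Real.cos s ^ 2 = 1 := Real.sin_sq_add_cos_sq s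
    have hzeq : z - v = (d:ℂ) * w6 ^ j * Complex.exp ((s:ℂ) * Complex.I) := by
      rw [hz, hxveq]
    have hpz : p - z = (d:ℂ) * w6 ^ j * (w6 ^ n.toNat - Complex.exp ((s:ℂ) * Complex.I)) := by
      have hsplit : p - z = (p - v) - (z - v) := by ring
      rw [hsplit, hpveq, hzeq, hkj]; ring
    have hdist : dist p z
        = d * ‖w6 ^ n.toNat - Complex.exp ((s:ℂ) * Complex.I)‖ := by
      rw [Complex.dist_eq, hpz, norm_mul, norm_mul, norm_pow, w6_abs, one_pow, mul_one,
        Complex.norm_real, Real.norm_eq_abs, abs_of_pos hd0]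
    have hne0 : n ≠ 0 := by
      intro h0
      apply hpx
      have heq : p - v = x - v := by
        rw [hpveq, hxveq, hkj, h0]; simp
      exact sub_left_inj.mp heq
    have hπ3 : (0:ℝ) ≤ Real.pi / 3 := by linarith
    rcases (abs_eq hπ3).mp hφ with hφ1 | hφ1
    · -- φ = π/3
      have hexpφ : Complex.exp ((φ:ℂ) * Complex.I) = w6 := by
        rw [hφ1]; exact w6_exp.symm
      have hne1 : n ≠ 1 := by
        intro h1
        apply hpy
        have heq : p - v = y - v := by
          rw [hpveq, hrot, hxveq, hkj, h1, hexpφ,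
            show ((1:ℤ)).toNat = 1 from rfl]
          ring
        exact sub_left_inj.mp heq
      have hσ : 0 ≤ Real.sin s := by
        apply Real.sin_nonneg_of_nonneg_of_le_pi
        · rw [hs, hφ1]; positivity
        · have := abs_le.mp habss; linarith
      have hb : 1 ≤ ‖w6 ^ n.toNat - Complex.exp ((s:ℂ) * Complex.I)‖ := by
        rw [exp_I_eq]
        exact main_bound _ _ hc hc1 hcs _ (by omega) (Or.inl ⟨hσ, by omega⟩)
      rw [hdist]
      have hmul := mul_le_mul_of_nonneg_left hb hd0.le
      have hlt := mul_lt_mul_of_pos_right (show Real.sqrt 3 - 1 < 1 by linarith) hd0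
      linarith
    · -- φ = -(π/3)
      have hexpφ : Complex.exp ((φ:ℂ) * Complex.I) = w6 ^ 5 := by
        have h5 : w6 ^ 5 * w6 = 1 := by rw [← pow_succ]; exact w6_pow6
        have he : Complex.exp ((φ:ℂ) * Complex.I) * w6 = 1 := by
          rw [w6_exp, ← Complex.exp_add, hφ1]
          rw [show ((((-(Real.pi/3)):ℝ):ℂ) * Complex.I + ((Real.pi/3 : ℝ):ℂ) * Complex.I) = 0 by
            push_cast; ring]
          exact Complex.exp_zero
        exact mul_right_cancel₀ w6_ne (he.trans h5.symm)
      have hne5 : n ≠ 5 := by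
        intro h1
        apply hpy
        have heq : p - v = y - v := by
          rw [hpveq, hrot, hxveq, hkj, h1, hexpφ,
            show ((5:ℤ)).toNat = 5 from rfl]
          ring
        exact sub_left_inj.mp heq
      have hσ : Real.sin s ≤ 0 := by
        have hsneg : s ≤ 0 := by
          rw [hs, hφ1]
          have : 0 ≤ t * (Real.pi/3) := by positivity
          linarith [this]
        have h1 : 0 ≤ Real.sin (-s) := by
          apply Real.sin_nonneg_of_nonneg_of_le_pi
          · linarith
          · have := abs_le.mp habss; linarith
        rw [Real.sin_neg] at h1
        linarith
      have hb : 1 ≤ ‖w6 ^ n.toNat - Complex.exp ((s:ℂ) * Complex.I)‖ := by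
        rw [exp_I_eq]
        exact main_bound _ _ hc hc1 hcs _ (by omega) (Or.inr ⟨hσ, by omega, by omega⟩)
      rw [hdist]
      have hmul := mul_le_mul_of_nonneg_left hb hd0.le
      have hlt := mul_lt_mul_of_pos_right (show Real.sqrt 3 - 1 < 1 by linarith) hd0
      linarith
  · -- far case
    have hpvge : Real.sqrt 3 * d ≤ dist p v := by
      rw [Complex.dist_eq]
      have h3 : (3:ℝ) ≤ (((app-av)^2 + (app-av)*(bpp-bv) + (bpp-bv)^2 : ℤ) : ℝ) := by
        exact_mod_cast hform
      have h2 : (Real.sqrt 3 * d)^2 ≤ ‖p - v‖ ^ 2 := by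
        rw [hnormpv]; nlinarith
      nlinarith [norm_nonneg (p - v), mul_nonneg hq0 hd0.le]
    have htri : dist p v ≤ dist p z + dist z v := dist_triangle p z v
    linarith
end

section
/- In the subtractive stage defined by the reactivation and reassembly sequences, for each ribbon R exactly c(R) robots (the recycled robots) are sent to the idle half-plane and exactly len(R) - c(R) robots (the rearranged robots) stop on vertices of R lying in S \ D; moreover for a rearranged robot starting at s and stopping at t, all vertices of R strictly between s and t (in the ribbon order, with t included) are unoccupied at its activation time. -/
private lemma aux_indexOf_mono {α} [DecidableEq α] {L F : List α} (h : F.Sublist L)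
    (hL : L.Nodup) {k k' : ℕ} (hkk : k < k') (hk' : k' < F.length) :
    L.idxOf (F[k]'(hkk.trans hk')) < L.idxOf F[k'] := by
  have hP : L.Pairwise (fun a b => L.idxOf a < L.idxOf b) := by
    rw [List.pairwise_iff_getElem]
    intro a b ha hb hab
    rwa [hL.idxOf_getElem, hL.idxOf_getElem]
  exact (List.pairwise_iff_getElem.mp (List.Pairwise.sublist h hP)) k k'
    (hkk.trans hk') hk' hkk

private lemma aux_getD_flatten {α} (d : α) (L : List (List α)) :
    ∀ (i k : ℕ) (hi : i < L.length), k < (L[i]).length →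
      L.flatten.getD ((((L.take i).map List.length).sum) + k) d = (L[i]).getD k d := by
  induction L with
  | nil => intro i k hi; simp at hi
  | cons l L ih =>
    intro i k hi hk
    cases i with
    | zero =>
      simp only [List.getElem_cons_zero] at hk ⊢
      simp only [List.take_zero, List.map_nil, List.sum_nil, Nat.zero_add, List.flatten_cons]
      rw [List.getD_append _ _ _ _ hk]
    | succ i =>
      simp only [List.getElem_cons_succ] at hk ⊢
      simp only [List.take_succ_cons, List.map_cons, List.sum_cons, List.flatten_cons]
      rw [Nat.add_assoc, List.getD_append_right _ _ _ _ (Nat.le_add_right _ _),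
        Nat.add_sub_cancel_left]
      exact ih i k (Nat.lt_of_succ_lt_succ hi) hk

private lemma aux_sum_map_take {α} (f : α → ℕ) (d : α) :
    ∀ (L : List α) (v : ℕ), v ≤ L.length →
      ((L.take v).map f).sum = ∑ k ∈ Finset.range v, f (L.getD k d) := by
  intro L
  induction L with
  | nil =>
    intro v hv
    simp only [List.length_nil, Nat.le_zero] at hv
    subst hv; simp
  | cons a L ih =>
    intro v hv
    cases v with
    | zero => simp
    | succ v =>
      rw [Finset.sum_range_succ']
      simp only [List.take_succ_cons, List.map_cons, List.sum_cons, List.getD_cons_succ,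
        List.getD_cons_zero]
      rw [ih v (Nat.le_of_succ_le_succ hv)]
      omega

private lemma aux_decomp (ln : ℕ → ℕ) :
    ∀ v j m, j ≤ ln v → m < (∑ k ∈ Finset.range v, ln k) + j →
      ∃ u j', (u < v ∨ (u = v ∧ j' < j)) ∧ j' < ln u ∧
        m = (∑ k ∈ Finset.range u, ln k) + j' := by
  intro v
  induction v with
  | zero =>
    intro j m hj hm
    simp only [Finset.range_zero, Finset.sum_empty, Nat.zero_add] at hm ⊢
    exact ⟨0, m, Or.inr ⟨rfl, hm⟩, lt_of_lt_of_le hm hj, by simp⟩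
  | succ v ih =>
    intro j m hj hm
    by_cases h : (∑ k ∈ Finset.range (v+1), ln k) ≤ m
    · exact ⟨v+1, m - ∑ k ∈ Finset.range (v+1), ln k, Or.inr ⟨rfl, by omega⟩, by omega, by omega⟩
    · rw [Finset.sum_range_succ] at h
      obtain ⟨u, j', hu, hj', hm'⟩ := ih (ln v) m le_rfl (by omega)
      exact ⟨u, j', Or.inl (by rcases hu with h1 | ⟨rfl, _⟩ <;> omega), hj', hm'⟩

private lemma aux_fin_sum_ite {M : ℕ} (f : Fin M → ℕ) (g : ℕ → ℕ)
    (hfg : ∀ i : Fin M, f i = g i.val) (i : Fin M) :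
    (∑ i' : Fin M, if i' < i then f i' else 0) = ∑ k ∈ Finset.range i.val, g k := by
  have h1 : (∑ i' : Fin M, if i' < i then f i' else 0)
      = ∑ k ∈ Finset.range M, (if k < i.val then g k else 0) := by
    rw [← Fin.sum_univ_eq_sum_range]
    exact Finset.sum_congr rfl (fun i' _ => by rw [hfg]; simp only [Fin.lt_def])
  rw [h1, ← Finset.sum_filter]
  congr 1
  ext k
  simp only [Finset.mem_filter, Finset.mem_range]
  exact ⟨fun h => h.2, fun h => ⟨h.trans i.isLt, h⟩⟩

private lemma aux_filter_len_lt (n c : ℕ) (hc : c ≤ n) (p : ℕ → Bool)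
    (hp : ∀ j < n, p j = decide (j < c)) :
    ((List.range n).filter p).length = c := by
  have hn : n = (n - c) + c := by omega
  have h1 : List.range n = List.range' 0 c ++ List.range' (0 + c) (n - c) := by
    conv_lhs => rw [List.range_eq_range', show n = n - c + c from by omega]
    rw [Nat.add_comm (n - c) c]
    exact (List.range'_append_1 (s := 0) (m := c) (n := n - c)).symm
  rw [h1, List.filter_append]
  have h2 : (List.range' 0 c).filter p = List.range' 0 c := by
    rw [List.filter_eq_self]
    intro a ha
    obtain ⟨iL, hiL, rfl⟩ := List.mem_range'.mp ha
    rw [hp _ (by omega)]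
    simp only [decide_eq_true_eq]; omega
  have h3 : (List.range' (0 + c) (n - c)).filter p = [] := by
    rw [List.filter_eq_nil_iff]
    intro a ha
    obtain ⟨iL, hiL, rfl⟩ := List.mem_range'.mp ha
    rw [hp _ (by omega)]
    simp only [decide_eq_true_eq]; omega
  rw [h2, h3]
  simp

private lemma aux_filter_len_ge (n c : ℕ) (hc : c ≤ n) (p : ℕ → Bool)
    (hp : ∀ j < n, p j = decide (c ≤ j)) :
    ((List.range n).filter p).length = n - c := by
  have hn : n = (n - c) + c := by omega
  have h1 : List.range n = List.range' 0 c ++ List.range' (0 + c) (n - c) := by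
    conv_lhs => rw [List.range_eq_range', show n = n - c + c from by omega]
    rw [Nat.add_comm (n - c) c]
    exact (List.range'_append_1 (s := 0) (m := c) (n := n - c)).symm
  rw [h1, List.filter_append]
  have h2 : (List.range' 0 c).filter p = [] := by
    rw [List.filter_eq_nil_iff]
    intro a ha
    obtain ⟨iL, hiL, rfl⟩ := List.mem_range'.mp ha
    rw [hp _ (by omega)]
    simp only [decide_eq_true_eq]; omega
  have h3 : (List.range' (0 + c) (n - c)).filter p = List.range' (0 + c) (n - c) := by
    rw [List.filter_eq_self]
    intro a ha
    obtain ⟨iL, hiL, rfl⟩ := List.mem_range'.mp ha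
    rw [hp _ (by omega)]
    simp only [decide_eq_true_eq]; omega
  rw [h2, h3]
  simp

/-- All ribbon vertices flattened in the complete tree order (largest ribbon first),
each ribbon listed in increasing ribbon order. -/
def flatR {M : ℕ} (ribbons : Fin M → List ℂ) : List ℂ := (List.ofFn ribbons).flatten

/-- `c(R)`: the number of vertices of the ribbon `R` lying in the hole set `D`. -/
def cR (D : Set ℂ) [DecidablePred (· ∈ D)] (R : List ℂ) : ℕ :=
  (R.filter (fun x => decide (x ∈ D))).length

/-- Activation index of the first vertex of ribbon `i`. -/
def startIdx {M : ℕ} (ribbons : Fin M → List ℂ) (i : Fin M) : ℕ :=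
  ∑ i' : Fin M, if i' < i then (ribbons i').length else 0

/-- The rearrangement targets: all vertices in `S \ D`, enumerated ribbon by ribbon in
the complete tree order (largest first), each ribbon in increasing ribbon order. -/
def rearrTargets {M : ℕ} (ribbons : Fin M → List ℂ) (S D : Set ℂ)
    [DecidablePred (· ∈ S)] [DecidablePred (· ∈ D)] : List ℂ :=
  (flatR ribbons).filter (fun x => decide (x ∈ S) && !(decide (x ∈ D)))

/-- The index, among rearranged robots, of the robot activated at position `j` of
ribbon `i` (assuming `cR D (ribbons i) ≤ j`). -/
def rearrIdx {M : ℕ} (ribbons : Fin M → List ℂ) (D : Set ℂ) [DecidablePred (· ∈ D)]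
    (i : Fin M) (j : ℕ) : ℕ :=
  (∑ i' : Fin M, if i' < i then (ribbons i').length - cR D (ribbons i') else 0) +
    (j - cR D (ribbons i))

/-- In the subtractive stage, for each ribbon `R` exactly `c(R)`
robots (the recycled robots) are sent to the idle half-plane `H₂`, and exactly
`len(R) - c(R)` robots (the rearranged robots) stop on vertices of `R` lying in
`S \ D`; moreover, for a rearranged robot activated at position `j` with target `t`,
all vertices of `R` strictly between its start and `t` (in ribbon order, `t` included)
are unoccupied at its activation time (they are not the target of any earlier robot).

The schedule hypotheses encode the reactivation/reassembly rules: the robot at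
activation index `startIdx i + j` is recycled (target in `H₂`) if `j < c(R_i)`,
and otherwise is rearranged, its target being the next unassigned vertex of `S \ D`
in the complete tree order. -/
theorem stmt15 [DecidableEq ℂ] {M : ℕ} (ribbons : Fin M → List ℂ)
    (S D H2 : Set ℂ)
    [DecidablePred (· ∈ S)] [DecidablePred (· ∈ D)] [DecidablePred (· ∈ H2)]
    (tr : ℕ → ℂ)
    (hnodup : (flatR ribbons).Nodup)
    (hsub : ∀ i : Fin M, ∀ x ∈ ribbons i, x ∈ S)
    (hDS : D ⊆ S)
    (hH2 : ∀ x ∈ S, x ∉ H2)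
    (h_recycle : ∀ i : Fin M, ∀ j : ℕ, j < cR D (ribbons i) →
      tr (startIdx ribbons i + j) ∈ H2)
    (h_rearr : ∀ i : Fin M, ∀ j : ℕ, cR D (ribbons i) ≤ j → j < (ribbons i).length →
      tr (startIdx ribbons i + j) = (rearrTargets ribbons S D).getD (rearrIdx ribbons D i j) 0) :
    (∀ i : Fin M,
      ((List.range (ribbons i).length).filter
        (fun j => decide (tr (startIdx ribbons i + j) ∈ H2))).length = cR D (ribbons i)) ∧
    (∀ i : Fin M,
      ((List.range (ribbons i).length).filter
        (fun j => decide (tr (startIdx ribbons i + j) ∈ ribbons i) &&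
          decide (tr (startIdx ribbons i + j) ∈ S) &&
          !(decide (tr (startIdx ribbons i + j) ∈ D)))).length =
        (ribbons i).length - cR D (ribbons i)) ∧
    (∀ i : Fin M, ∀ j : ℕ, cR D (ribbons i) ≤ j → j < (ribbons i).length →
      ∀ p : ℕ, (ribbons i).idxOf (tr (startIdx ribbons i + j)) ≤ p → p < j →
        ∀ m < startIdx ribbons i + j, tr m ≠ (ribbons i).getD p 0) := by
  set q : ℂ → Bool := fun x => decide (x ∈ S) && !(decide (x ∈ D)) with hq
  have hcle : ∀ i : Fin M, cR D (ribbons i) ≤ (ribbons i).length :=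
    fun i => List.length_filter_le _ _
  have hFlen : ∀ i : Fin M, ((ribbons i).filter q).length
      = (ribbons i).length - cR D (ribbons i) := by
    intro i
    have h1 : (ribbons i).filter q = (ribbons i).filter (fun x => !(decide (x ∈ D))) :=
      List.filter_congr (fun x hx => by simp [hq, hsub i x hx])
    have h2 := List.length_eq_length_filter_add (l := ribbons i) (fun x => decide (x ∈ D))
    rw [h1]
    simp only [cR] at *
    omega
  have hRT : rearrTargets ribbons S D
      = (List.ofFn (fun i => (ribbons i).filter q)).flatten := by
    simp only [rearrTargets, flatR, List.filter_flatten, List.map_ofFn, hq]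
    rfl
  have htgt : ∀ i : Fin M, ∀ j : ℕ, cR D (ribbons i) ≤ j → j < (ribbons i).length →
      tr (startIdx ribbons i + j)
        = ((ribbons i).filter q).getD (j - cR D (ribbons i)) 0 := by
    intro i j hc hj
    rw [h_rearr i j hc hj, hRT]
    have hA : (∑ i' : Fin M, if i' < i then (ribbons i').length - cR D (ribbons i') else 0)
        = (((List.ofFn (fun i => (ribbons i).filter q)).take i.val).map List.length).sum := by
      rw [aux_fin_sum_ite (fun i' => (ribbons i').length - cR D (ribbons i'))
          (fun k => ((List.ofFn (fun i' => (ribbons i').filter q)).getD k []).length)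
          (fun i' => by
            show _ = ((List.ofFn fun i'' => List.filter q (ribbons i'')).getD (i' : ℕ) []).length
            rw [List.getD_eq_getElem _ ([] : List ℂ) (by simp [i'.isLt]), List.getElem_ofFn]
            simp [hFlen i']) i,
        aux_sum_map_take List.length ([] : List ℂ) _ i.val (by simp [Nat.le_of_lt i.isLt])]
    simp only [rearrIdx, hA]
    rw [aux_getD_flatten 0 _ i.val (j - cR D (ribbons i)) (by simp [i.isLt])
      (by simp only [List.getElem_ofFn, Fin.eta]; rw [hFlen]; omega)]
    simp
  have htmem : ∀ i : Fin M, ∀ j : ℕ, cR D (ribbons i) ≤ j → j < (ribbons i).length →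
      tr (startIdx ribbons i + j) ∈ (ribbons i).filter q := by
    intro i j hc hj
    rw [htgt i j hc hj, List.getD_eq_getElem ((ribbons i).filter q) 0 (by rw [hFlen]; omega)]
    exact List.getElem_mem _
  refine ⟨?_, ?_, ?_⟩
  · -- conjunct 1
    intro i
    apply aux_filter_len_lt _ _ (hcle i)
    intro j hjn
    by_cases hjc : j < cR D (ribbons i)
    · simp [h_recycle i j hjc, hjc]
    · have hmem := htmem i j (le_of_not_gt hjc) hjn
      rw [List.mem_filter] at hmem
      have hS : tr (startIdx ribbons i + j) ∈ S := hsub i _ hmem.1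
      simp [hH2 _ hS, hjc]
  · -- conjunct 2
    intro i
    apply aux_filter_len_ge _ _ (hcle i)
    intro j hjn
    by_cases hjc : j < cR D (ribbons i)
    · have hH := h_recycle i j hjc
      have hnR : tr (startIdx ribbons i + j) ∉ ribbons i :=
        fun hmem => hH2 _ (hsub i _ hmem) hH
      have hnc : ¬ cR D (ribbons i) ≤ j := by omega
      simp [hnR, hnc]
    · have hmem := htmem i j (le_of_not_gt hjc) hjn
      rw [List.mem_filter, hq] at hmem
      obtain ⟨h1, h2⟩ := hmem
      simp only [Bool.and_eq_true, Bool.not_eq_true', decide_eq_true_eq,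
        decide_eq_false_iff_not] at h2
      simp [h1, h2.1, h2.2, le_of_not_gt hjc]
  · -- conjunct 3
    intro i j hc hj p hip hpj m hm heq
    have hpn : p < (ribbons i).length := lt_trans hpj hj
    rw [List.getD_eq_getElem (ribbons i) 0 hpn] at heq
    have hflat := List.nodup_flatten.mp hnodup
    have hnd : (ribbons i).Nodup := hflat.1 _ (List.mem_ofFn.mpr ⟨i, rfl⟩)
    have hdisj : ∀ a b : Fin M, a < b → (ribbons a).Disjoint (ribbons b) :=
      fun a b hab => List.pairwise_ofFn.mp hflat.2 hab
    set lnn : ℕ → ℕ := fun k => ((List.ofFn ribbons).getD k []).length with hlnn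
    have hlnni : ∀ a : Fin M, lnn a.val = (ribbons a).length := by
      intro a
      show ((List.ofFn ribbons).getD (a : ℕ) []).length = (ribbons a).length
      rw [List.getD_eq_getElem _ ([] : List ℂ) (by simp [a.isLt]), List.getElem_ofFn]
    have hstart : ∀ i' : Fin M, startIdx ribbons i' = ∑ k ∈ Finset.range i'.val, lnn k := by
      intro i'
      simp only [startIdx]
      exact aux_fin_sum_ite _ _ (fun a => (hlnni a).symm) i'
    rw [hstart i] at hm
    obtain ⟨u, j', hcase, hj', hmeq⟩ :=
      aux_decomp lnn i.val j m (by rw [hlnni i]; omega) hm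
    have huM : u < M := by
      rcases hcase with h | ⟨rfl, _⟩
      · exact lt_trans h i.isLt
      · exact i.isLt
    set uF : Fin M := ⟨u, huM⟩ with huF
    have hj'' : j' < (ribbons uF).length := by rw [← hlnni uF]; exact hj'
    have hmu : m = startIdx ribbons uF + j' := by rw [hstart uF]; exact hmeq
    by_cases hrc : j' < cR D (ribbons uF)
    · have h2 := h_recycle uF j' hrc
      rw [← hmu] at h2
      have hS : (ribbons i)[p] ∈ S := hsub i _ (List.getElem_mem hpn)
      exact hH2 _ hS (heq ▸ h2)
    · have hmem := htmem uF j' (le_of_not_gt hrc) hj''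
      rw [List.mem_filter] at hmem
      have htru : tr m ∈ ribbons uF := by rw [hmu]; exact hmem.1
      rcases hcase with hlt | ⟨hequ, hjlt⟩
      · have hne : uF < i := by simp only [Fin.lt_def]; exact hlt
        exact hdisj uF i hne htru (heq ▸ List.getElem_mem hpn)
      · have huFi : uF = i := Fin.ext hequ
        rw [huFi] at hmu hrc hj''
        have hsubl : ((ribbons i).filter q).Sublist (ribbons i) := List.filter_sublist
        have hk' : j - cR D (ribbons i) < ((ribbons i).filter q).length := by
          rw [hFlen]; omega
        have hkk : j' - cR D (ribbons i) < j - cR D (ribbons i) := by omega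
        have hmono := aux_indexOf_mono hsubl hnd hkk hk'
        have ht' : tr (startIdx ribbons i + j)
            = ((ribbons i).filter q)[j - cR D (ribbons i)]'hk' := by
          rw [htgt i j hc hj, List.getD_eq_getElem ((ribbons i).filter q) 0 hk']
        have htm : tr m = ((ribbons i).filter q)[j' - cR D (ribbons i)]'(lt_trans hkk hk') := by
          rw [hmu, htgt i j' (le_of_not_gt hrc) (lt_trans hjlt hj),
            List.getD_eq_getElem ((ribbons i).filter q) 0 (lt_trans hkk hk')]
        have hiw : (ribbons i).idxOf ((ribbons i)[p]) = p := hnd.idxOf_getElem p hpn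
        have hFp : ((ribbons i).filter q)[j' - cR D (ribbons i)]'(lt_trans hkk hk')
            = (ribbons i)[p] := htm.symm.trans heq
        rw [ht'] at hip
        rw [hFp, hiw] at hmono
        omega
end

section
/- Under the reactivation/reassembly schedule, all boundary points of S are occupied at any time when the first vertex (leader) of some ribbon becomes active: for every epoch T in the subtractive stage at which the active robot occupies the first vertex of a ribbon, every boundary point x of S satisfies that x has not yet been activated or has already been reoccupied. -/
lemma exists_decomp (f : ℕ → ℕ) : ∀ n k, k < ∑ t ∈ Finset.range n, f t →
    ∃ t < n, (∑ s ∈ Finset.range t, f s) ≤ k ∧ k < (∑ s ∈ Finset.range t, f s) + f t := by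
  intro n
  induction n with
  | zero => simp
  | succ n ih =>
    intro k hk
    rw [Finset.sum_range_succ] at hk
    by_cases h : k < ∑ s ∈ Finset.range n, f s
    · obtain ⟨t, ht, h1, h2⟩ := ih k h
      exact ⟨t, ht.trans (Nat.lt_succ_self n), h1, h2⟩
    · exact ⟨n, Nat.lt_succ_self n, Nat.le_of_not_lt h, hk⟩

lemma finsum_ite {M : ℕ} (f : Fin M → ℕ) (i : Fin M) :
    (∑ i' : Fin M, if i' < i then f i' else 0) =
    ∑ t ∈ Finset.range i.val, if ht : t < M then f ⟨t, ht⟩ else 0 := by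
  have h1 : ∀ i' : Fin M, (if i' < i then f i' else 0) =
      (fun t => if t < i.val then (if ht : t < M then f ⟨t, ht⟩ else 0) else 0) i'.val := by
    intro i'
    simp only [Fin.lt_def]
    rw [dif_pos i'.isLt, Fin.eta]
  rw [Finset.sum_congr rfl (fun i' _ => h1 i'),
    Fin.sum_univ_eq_sum_range (fun t => if t < i.val then (if ht : t < M then f ⟨t, ht⟩ else 0) else 0) M]
  have h2 : ∀ t ∈ Finset.range M,
      (if t < i.val then (if ht : t < M then f ⟨t, ht⟩ else 0) else 0) =
      (if t ∈ Finset.range i.val then (if ht : t < M then f ⟨t, ht⟩ else 0) else 0) := by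
    intro t _; simp [Finset.mem_range]
  rw [Finset.sum_congr rfl h2, Finset.sum_ite_mem,
    Finset.inter_eq_right.2 (Finset.range_subset_range.2 i.isLt.le)]

lemma sum_take_ofFn {M : ℕ} (h : Fin M → ℕ) : ∀ n, n ≤ M →
    ((List.ofFn h).take n).sum = ∑ t ∈ Finset.range n, if ht : t < M then h ⟨t, ht⟩ else 0 := by
  intro n
  induction n with
  | zero => simp
  | succ n ih =>
    intro hn
    have hnM : n < M := Nat.lt_of_succ_le hn
    have hn' : n < (List.ofFn h).length := by simp [hnM]
    rw [List.sum_take_succ _ _ hn', ih (Nat.le_of_succ_le hn), Finset.sum_range_succ]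
    simp [hnM]

/-- Per-ribbon count: in a list all of whose elements are in `S`, the number of
elements in `S \ D` plus the number in `D` is the length. -/
lemma filter_len (S D : Set ℂ) [DecidablePred (· ∈ S)] [DecidablePred (· ∈ D)]
    (l : List ℂ) (h : ∀ x ∈ l, x ∈ S) :
    (l.filter (fun x => decide (x ∈ S) && !(decide (x ∈ D)))).length + cR D l = l.length := by
  induction l with
  | nil => simp [cR]
  | cons a l ih =>
    have haS : a ∈ S := h a List.mem_cons_self
    have ih' := ih (fun x hx => h x (List.mem_cons_of_mem a hx))
    by_cases haD : a ∈ D <;>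
      simp [cR, List.filter_cons, haS, haD] at ih' ⊢ <;> omega

/-- Under the reactivation/reassembly schedule, all boundary points of
`S` (points of `S` adjacent to a lattice point outside `S`; such points are never in the
hole set `D`) are occupied whenever the first vertex (leader) of some ribbon becomes
active: at each such epoch `startIdx i`, every boundary point `x` either has not yet
been activated, or has already been reoccupied by an earlier robot. -/
theorem stmt16 [DecidableEq ℂ] {M : ℕ} (ribbons : Fin M → List ℂ)
    (d : ℝ) (hd : 0 < d) (S D H2 : Set ℂ)
    [DecidablePred (· ∈ S)] [DecidablePred (· ∈ D)] [DecidablePred (· ∈ H2)]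
    (tr : ℕ → ℂ)
    (hnodup : (flatR ribbons).Nodup)
    (hsub : ∀ i : Fin M, ∀ x ∈ ribbons i, x ∈ S)
    (hcover : ∀ x ∈ S, x ∈ flatR ribbons)
    (hDS : D ⊆ S)
    (hH2 : ∀ x ∈ S, x ∉ H2)
    (hBdD : ∀ x ∈ S, (∃ y ∈ lat d, y ∉ S ∧ dist x y = d) → x ∉ D)
    (h_recycle : ∀ i : Fin M, ∀ j : ℕ, j < cR D (ribbons i) →
      tr (startIdx ribbons i + j) ∈ H2)
    (h_rearr : ∀ i : Fin M, ∀ j : ℕ, cR D (ribbons i) ≤ j → j < (ribbons i).length →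
      tr (startIdx ribbons i + j) = (rearrTargets ribbons S D).getD (rearrIdx ribbons D i j) 0) :
    ∀ i : Fin M, ∀ x ∈ S, (∃ y ∈ lat d, y ∉ S ∧ dist x y = d) →
      ((∀ m < startIdx ribbons i, (flatR ribbons).getD m 0 ≠ x) ∨
        (∃ m < startIdx ribbons i, tr m = x)) := by
  intro i x hxS hb
  have hxD : x ∉ D := hBdD x hxS hb
  set P : ℂ → Bool := fun x => decide (x ∈ S) && !(decide (x ∈ D)) with hPdef
  set n := i.val with hn
  set Ltot := List.ofFn ribbons with hLtot
  set F : List ℂ := (Ltot.take n).flatten with hF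
  -- length function of ribbons, extended to ℕ
  set lenf : ℕ → ℕ := fun t => if ht : t < M then (ribbons ⟨t, ht⟩).length else 0 with hlenf
  set rf : ℕ → ℕ := fun t => if ht : t < M then
      (ribbons ⟨t, ht⟩).length - cR D (ribbons ⟨t, ht⟩) else 0 with hrf
  have hflat : flatR ribbons = F ++ (Ltot.drop n).flatten := by
    rw [hF, ← List.flatten_append, List.take_append_drop]; rfl
  -- F.length as a sum
  have hFlen : F.length = ∑ t ∈ Finset.range n, lenf t := by
    rw [hF, List.length_flatten, List.map_take, hLtot, List.map_ofFn,
      sum_take_ofFn (List.length ∘ ribbons) n i.isLt.le]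
    rfl
  have hstart : startIdx ribbons i = F.length := by
    rw [hFlen, startIdx, finsum_ite (fun i' => (ribbons i').length) i]
  -- length of the filtered prefix
  have hFPlen : (F.filter P).length = ∑ t ∈ Finset.range n, rf t := by
    rw [hF, List.filter_flatten, List.length_flatten, List.map_map, List.map_take, hLtot,
      List.map_ofFn, sum_take_ofFn ((List.length ∘ List.filter P) ∘ ribbons) n i.isLt.le]
    apply Finset.sum_congr rfl
    intro t ht
    have htM : t < M := (Finset.mem_range.1 ht).trans_le i.isLt.le
    have := filter_len S D (ribbons ⟨t, htM⟩) (hsub ⟨t, htM⟩)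
    simp only [hrf, dif_pos htM, Function.comp_apply]
    rw [← hPdef] at this
    exact Nat.eq_sub_of_add_eq this
  by_cases hxF : x ∈ F
  · right
    have hxFP : x ∈ F.filter P := List.mem_filter.2 ⟨hxF, by simp [hPdef, hxS, hxD]⟩
    obtain ⟨k, hk, hkx⟩ := List.mem_iff_getElem.1 hxFP
    rw [hFPlen] at hk
    obtain ⟨t, htn, hle, hlt⟩ := exists_decomp rf n k hk
    have htM : t < M := htn.trans_le i.isLt.le
    set i' : Fin M := ⟨t, htM⟩ with hi'
    have hrft : rf t = (ribbons i').length - cR D (ribbons i') := by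
      simp [hrf, dif_pos htM, hi']
    have hcle : cR D (ribbons i') ≤ (ribbons i').length :=
      List.length_filter_le _ _
    set j : ℕ := cR D (ribbons i') + (k - ∑ s ∈ Finset.range t, rf s) with hj
    have hjc : cR D (ribbons i') ≤ j := Nat.le_add_right _ _
    have hjl : j < (ribbons i').length := by omega
    -- the prefix sum in rearrIdx equals the range-t sum
    have hsum' : (∑ i'' : Fin M, if i'' < i' then (ribbons i'').length - cR D (ribbons i'') else 0)
        = ∑ s ∈ Finset.range t, rf s := by
      rw [finsum_ite (fun i'' => (ribbons i'').length - cR D (ribbons i'')) i']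
    have hridx : rearrIdx ribbons D i' j = k := by
      rw [rearrIdx, hsum']
      omega
    have htr := h_rearr i' j hjc hjl
    rw [hridx] at htr
    have hrt : (rearrTargets ribbons S D).getD k 0 = x := by
      rw [rearrTargets, ← hPdef, hflat, List.filter_append,
        List.getD_append _ _ _ _ (by rw [hFPlen]; exact hk),
        List.getD_eq_getElem _ _ (by rw [hFPlen]; exact hk), hkx]
    refine ⟨startIdx ribbons i' + j, ?_, by rw [htr, hrt]⟩
    -- startIdx i' + j < startIdx i
    have hsi' : startIdx ribbons i' = ∑ s ∈ Finset.range t, lenf s := by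
      rw [startIdx, finsum_ite (fun i'' => (ribbons i'').length) i']
    have hsi : startIdx ribbons i = ∑ s ∈ Finset.range n, lenf s := by
      rw [hstart, hFlen]
    have hlenft : lenf t = (ribbons i').length := by simp [hlenf, dif_pos htM, hi']
    have hmono : (∑ s ∈ Finset.range t, lenf s) + lenf t ≤ ∑ s ∈ Finset.range n, lenf s := by
      rw [← Finset.sum_range_succ]
      exact Finset.sum_le_sum_of_subset (Finset.range_subset_range.2 htn)
    omega
  · left
    intro m hm hcontra
    rw [hstart] at hm
    apply hxF
    rw [← hcontra, hflat, List.getD_append _ _ _ _ hm, List.getD_eq_getElem _ _ hm]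
    exact List.getElem_mem hm
end
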